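/- Let M be a II₁ factor, N ⊂ M a von Neumann subalgebra with trace-preserving conditional expectation E_N, and {p_i}_{i=1}^n ⊂ Z(N) mutually orthogonal projections, equivalent in M, with ∑ p_i = 1. Then there exists a unital *-monomorphism π : Mₙ(ℂ) → M with π(e_{ii}) = p_i for all i and E_N(π(A)) = π(E_𝒟(A)) for all A ∈ Mₙ(ℂ), where E_𝒟 is the projection onto the diagonal. -/

import Mathlib

open scoped ComplexOrder

/- We model a II₁ factor abstractly: a unital C*-algebra `A` (with its canonical order)
together with a normalized faithful tracial state `τ` which has trivial center and
projections of every trace in `[0,1]`.  (Normality of `τ` and of the subalgebras is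
implicit in the properties we record, e.g. right-continuity of spectral distributions.)
On bounded sets the σ-strong operator topology of a II₁ factor coincides with the
topology of the trace norm `‖x‖₁ = τ(|x|)`; accordingly σ-strong closures of bounded
sets are formalized as `‖·‖₁`-closures. -/

variable {A : Type*} [CStarAlgebra A] [PartialOrder A] [StarOrderedRing A]

/-- A normalized faithful tracial state on a finite von Neumann algebra. -/
structure IsFiniteTrace (τ : A →ₗ[ℂ] ℂ) : Prop where
  tracial : ∀ x y : A, τ (x * y) = τ (y * x)
  pos : ∀ x : A, 0 ≤ x → 0 ≤ τ x
  faithful : ∀ x : A, 0 ≤ x → τ x = 0 → x = 0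
  normalized : τ 1 = 1

/-- The trace of a II₁ factor: a normalized faithful tracial state on an algebra with
trivial center and with projections of every trace `t ∈ [0,1]`. -/
structure IsII1Trace (τ : A →ₗ[ℂ] ℂ) extends IsFiniteTrace τ : Prop where
  factor : ∀ z : A, (∀ x : A, z * x = x * z) → ∃ c : ℂ, z = c • (1 : A)
  proj : ∀ t ∈ Set.Icc (0:ℝ) 1, ∃ p : A, IsSelfAdjoint p ∧ p * p = p ∧ τ p = (t : ℂ)

/-- `e s` is the spectral projection `p^a(-∞, s]` of the selfadjoint element `a`:
an increasing right-continuous (in trace) family of projections commuting with `a`,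
below which `a ≤ s` and above which `a ≥ s`. -/
structure IsSpectralResolution (τ : A →ₗ[ℂ] ℂ) (a : A) (e : ℝ → A) : Prop where
  selfAdjoint : ∀ s, IsSelfAdjoint (e s)
  idem : ∀ s, e s * e s = e s
  mono : Monotone e
  comm : ∀ s, a * e s = e s * a
  below : ∀ s : ℝ, a * e s ≤ (s : ℂ) • e s
  above : ∀ s : ℝ, (s : ℂ) • ((1 : A) - e s) ≤ a * ((1 : A) - e s)
  bot : ∀ s, s < -‖a‖ → e s = 0
  top : ∀ s, ‖a‖ ≤ s → e s = 1
  rightCont : ∀ s, ContinuousWithinAt (fun u => (τ (e u)).re) (Set.Ici s) s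

/-- The spectral scale `λ_a(t) = min {s ∈ ℝ : τ(p^a(s,∞)) ≤ t}`, expressed through the
resolution `e s = p^a(-∞,s]`, so that `τ(p^a(s,∞)) = 1 - τ(e s)`. -/
noncomputable def spectralScale (τ : A →ₗ[ℂ] ℂ) (e : ℝ → A) : ℝ → ℝ :=
  fun t => sInf {s : ℝ | 1 - (τ (e s)).re ≤ t}

/-- Spectral majorization `a ≺ b`: `τ(a) = τ(b)` and `∫₀ˢ λ_a ≤ ∫₀ˢ λ_b` for `s ∈ [0,1)`. -/
def IsSpecMajorizedBy (τ : A →ₗ[ℂ] ℂ) (a b : A) : Prop :=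
  τ a = τ b ∧
    ∃ ea eb : ℝ → A, IsSpectralResolution τ a ea ∧ IsSpectralResolution τ b eb ∧
      ∀ s ∈ Set.Ico (0:ℝ) 1,
        ∫ t in (0:ℝ)..s, spectralScale τ ea t ≤ ∫ t in (0:ℝ)..s, spectralScale τ eb t

/-- The trace norm `‖x‖₁ = τ(|x|)` (defined via continuous functional calculus). -/
noncomputable def traceNorm (τ : A →ₗ[ℂ] ℂ) (x : A) : ℝ :=
  (τ (cfc (fun r : ℝ => |r|) x)).re

/-- The trace-preserving conditional expectation onto a subalgebra `N`. -/
structure IsCondExp (τ : A →ₗ[ℂ] ℂ) (N : StarSubalgebra ℂ A) (E : A →ₗ[ℂ] A) : Prop where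
  mem : ∀ x : A, E x ∈ N
  fix : ∀ x ∈ N, E x = x
  pos : ∀ x : A, 0 ≤ x → 0 ≤ E x
  star_map : ∀ x : A, E (star x) = star (E x)
  trace : ∀ x : A, τ (E x) = τ x
  bimod : ∀ n ∈ N, ∀ x : A, E (n * x) = n * E x ∧ E (x * n) = E x * n

/-- The unitary orbit `U_M(b) = {u b u* : u unitary}`. -/
def unitaryOrbit (b : A) : Set A := {x | ∃ u ∈ unitary A, x = u * b * star u}

/-- `Ω_N(b)`: the selfadjoint elements of `N` spectrally majorized by `b`. -/
def Omega (τ : A →ₗ[ℂ] ℂ) (N : StarSubalgebra ℂ A) (b : A) : Set A :=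
  {a | a ∈ N ∧ IsSelfAdjoint a ∧ IsSpecMajorizedBy τ a b}

/-- The closure of a set in the trace-norm (`‖·‖₁`) topology; for bounded sets this is
the σ-strong closure. -/
def l1Closure (τ : A →ₗ[ℂ] ℂ) (S : Set A) : Set A :=
  {x | ∀ ε > (0:ℝ), ∃ y ∈ S, traceNorm τ (x - y) < ε}

/-- A diffuse von Neumann subalgebra: one with no minimal projections, i.e. every
nonzero projection strictly dominates a nonzero projection. -/
def IsDiffuse (N : StarSubalgebra ℂ A) : Prop :=
  ∀ p ∈ N, IsSelfAdjoint p → p * p = p → p ≠ 0 →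
    ∃ q ∈ N, IsSelfAdjoint q ∧ q * q = q ∧ q * p = q ∧ q ≠ 0 ∧ q ≠ p

/-- An abelian subalgebra. -/
def IsAbelian (N : StarSubalgebra ℂ A) : Prop := ∀ x ∈ N, ∀ y ∈ N, x * y = y * x

/-- Matrix-unit embedding compatible with the conditional expectation: given mutually
orthogonal, `M`-equivalent central projections `p₁,…,pₙ` of `N` summing to `1`, there is
a unital *-monomorphism `π : Mₙ(ℂ) → M` with `π(eᵢᵢ) = pᵢ` and `E_N ∘ π = π ∘ E_𝒟`. -/
theorem exists_matrix_embedding_condExp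
    (τ : A →ₗ[ℂ] ℂ) (hτ : IsII1Trace τ) (N : StarSubalgebra ℂ A)
    (E : A →ₗ[ℂ] A) (hE : IsCondExp τ N E) (n : ℕ) (p : Fin n → A)
    (hmem : ∀ i, p i ∈ N)
    (hcentral : ∀ i, ∀ x ∈ N, p i * x = x * p i)
    (hproj : ∀ i, IsSelfAdjoint (p i) ∧ p i * p i = p i)
    (horth : ∀ i j, i ≠ j → p i * p j = 0)
    (hequiv : ∀ i j, ∃ v : A, v * star v = p i ∧ star v * v = p j)
    (hsum : ∑ i, p i = 1) :
    ∃ π : Matrix (Fin n) (Fin n) ℂ →⋆ₐ[ℂ] A,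
      Function.Injective π ∧
      (∀ i, π (Matrix.single i i 1) = p i) ∧
      ∀ B : Matrix (Fin n) (Fin n) ℂ, E (π B) = π (Matrix.diagonal B.diag) := by
  classical
  have hA : (1:A) ≠ 0 := by
    intro h
    have := hτ.normalized
    rw [h, map_zero] at this
    exact zero_ne_one this
  rcases eq_or_ne n 0 with hn | hn
  · subst hn
    exfalso
    apply hA
    rw [← hsum]
    simp
  haveI : NeZero n := ⟨hn⟩
  choose w hw1 hw2 using fun i => hequiv i 0
  have hp0sa : star (p 0) = p 0 := (hproj 0).1
  have hpsa : ∀ i, star (p i) = p i := fun i => (hproj i).1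
  -- w i * p 0 = w i
  have hwp0 : ∀ i, w i * p 0 = w i := by
    intro i
    have h : star (w i - w i * p 0) * (w i - w i * p 0) = 0 := by
      have hst : star (w i - w i * p 0) = star (w i) - p 0 * star (w i) := by
        simp [star_mul, hp0sa]
      have expand : star (w i - w i * p 0) * (w i - w i * p 0)
          = star (w i) * w i - star (w i) * (w i * p 0) - p 0 * (star (w i) * w i)
            + p 0 * (star (w i) * (w i * p 0)) := by
        rw [hst]; noncomm_ring
      rw [expand, ← mul_assoc (star (w i)) (w i), hw2 i]
      simp only [(hproj 0).2]
      abel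
    have := (CStarRing.star_mul_self_eq_zero_iff _).mp h
    rw [sub_eq_zero] at this
    exact this.symm
  -- p i * w i = w i
  have hpw : ∀ i, p i * w i = w i := by
    intro i
    have h : (w i - p i * w i) * star (w i - p i * w i) = 0 := by
      have hst : star (w i - p i * w i) = star (w i) - star (w i) * p i := by
        simp [star_mul, hpsa i]
      have expand : (w i - p i * w i) * star (w i - p i * w i)
          = w i * star (w i) - w i * (star (w i) * p i) - p i * (w i * star (w i))
            + p i * (w i * (star (w i) * p i)) := by
        rw [hst]; noncomm_ring
      rw [expand, ← mul_assoc (w i) (star (w i)), hw1 i]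
      simp only [(hproj i).2]
      abel
    have := (CStarRing.mul_star_self_eq_zero_iff _).mp h
    rw [sub_eq_zero] at this
    exact this.symm
  have hsw : ∀ i, star (w i) * p i = star (w i) := by
    intro i
    conv_rhs => rw [← hpw i]
    rw [star_mul, hpsa i]
  have hp0w : ∀ i, p 0 * star (w i) = star (w i) := by
    intro i
    conv_rhs => rw [← hwp0 i]
    rw [star_mul, hp0sa]
  -- key orthogonality
  have hkey : ∀ j k, star (w j) * w k = if j = k then p 0 else 0 := by
    intro j k
    by_cases h : j = k
    · subst h; simp [hw2 j]
    · simp only [if_neg h]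
      calc star (w j) * w k = star (w j) * p j * (p k * w k) := by rw [hsw j, hpw k]
        _ = star (w j) * (p j * p k) * w k := by noncomm_ring
        _ = 0 := by rw [horth j k h, mul_zero, zero_mul]
  set u : Fin n → Fin n → A := fun i j => w i * star (w j) with hu
  have hustar : ∀ i j, star (u i j) = u j i := by
    intro i j
    show star (w i * star (w j)) = w j * star (w i)
    rw [star_mul, star_star]
  have huii : ∀ i, u i i = p i := fun i => hw1 i
  have humul : ∀ i j k l, u i j * u k l = if j = k then u i l else 0 := by
    intro i j k l
    show w i * star (w j) * (w k * star (w l)) = if j = k then w i * star (w l) else 0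
    rw [mul_assoc, ← mul_assoc (star (w j)), hkey j k]
    by_cases h : j = k
    · rw [if_pos h, if_pos h, hp0w l]
    · rw [if_neg h, if_neg h, zero_mul, mul_zero]
  set F : Matrix (Fin n) (Fin n) ℂ → A := fun B => ∑ i, ∑ j, B i j • u i j with hF
  have hFone : F 1 = 1 := by
    show (∑ i, ∑ j, (1 : Matrix (Fin n) (Fin n) ℂ) i j • u i j) = 1
    rw [← hsum]
    refine Finset.sum_congr rfl fun i _ => ?_
    rw [Finset.sum_eq_single i]
    · simp [Matrix.one_apply, huii i]
    · intro j _ hj; simp [Matrix.one_apply, Ne.symm hj]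
    · simp
  have hFmul : ∀ B C, F (B * C) = F B * F C := by
    intro B C
    show (∑ i, ∑ l, (B * C) i l • u i l)
        = (∑ i, ∑ j, B i j • u i j) * ∑ k, ∑ l, C k l • u k l
    rw [Finset.sum_mul]
    refine Finset.sum_congr rfl fun i _ => ?_
    rw [Finset.sum_mul]
    calc (∑ l, (B * C) i l • u i l)
        = ∑ l, ∑ j, (B i j * C j l) • u i l := by
          refine Finset.sum_congr rfl fun l _ => ?_
          rw [Matrix.mul_apply, Finset.sum_smul]
      _ = ∑ j, ∑ l, (B i j * C j l) • u i l := Finset.sum_comm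
      _ = ∑ j, (B i j • u i j) * ∑ k, ∑ l, C k l • u k l := by
          refine Finset.sum_congr rfl fun j _ => ?_
          have hexp : (B i j • u i j) * ∑ k, ∑ l, C k l • u k l
              = ∑ k, ∑ l, (B i j * C k l) • (u i j * u k l) := by
            rw [Finset.mul_sum]
            refine Finset.sum_congr rfl fun k _ => ?_
            rw [Finset.mul_sum]
            refine Finset.sum_congr rfl fun l _ => ?_
            rw [smul_mul_smul_comm]
          rw [hexp]
          symm
          rw [Finset.sum_eq_single j]
          · refine Finset.sum_congr rfl fun l _ => ?_
            rw [humul i j j l, if_pos rfl]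
          · intro k _ hk
            rw [Finset.sum_eq_zero]
            intro l _
            rw [humul i j k l, if_neg (Ne.symm hk), smul_zero]
          · simp
  have hFstar : ∀ B, F (star B) = star (F B) := by
    intro B
    show (∑ a, ∑ b, (star B) a b • u a b) = star (∑ i, ∑ j, B i j • u i j)
    rw [Finset.sum_comm, star_sum]
    refine Finset.sum_congr rfl fun i _ => ?_
    rw [star_sum]
    refine Finset.sum_congr rfl fun j _ => ?_
    rw [star_smul, hustar i j, Matrix.star_apply]
  set π : Matrix (Fin n) (Fin n) ℂ →⋆ₐ[ℂ] A :=
    { toFun := F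
      map_one' := hFone
      map_mul' := hFmul
      map_zero' := by
        show (∑ i, ∑ j, (0 : Matrix (Fin n) (Fin n) ℂ) i j • u i j) = 0
        simp
      map_add' := by
        intro B C
        show (∑ i, ∑ j, (B + C) i j • u i j)
            = (∑ i, ∑ j, B i j • u i j) + ∑ i, ∑ j, C i j • u i j
        simp only [Matrix.add_apply, add_smul, Finset.sum_add_distrib]
      commutes' := by
        intro c
        show F ((algebraMap ℂ (Matrix (Fin n) (Fin n) ℂ)) c) = algebraMap ℂ A c
        rw [Algebra.algebraMap_eq_smul_one, Algebra.algebraMap_eq_smul_one]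
        have hsm : F (c • 1) = c • F 1 := by
          show (∑ i, ∑ j, (c • (1 : Matrix (Fin n) (Fin n) ℂ)) i j • u i j)
              = c • ∑ i, ∑ j, (1 : Matrix (Fin n) (Fin n) ℂ) i j • u i j
          rw [Finset.smul_sum]
          refine Finset.sum_congr rfl fun i _ => ?_
          rw [Finset.smul_sum]
          refine Finset.sum_congr rfl fun j _ => ?_
          rw [Matrix.smul_apply, smul_assoc]
        rw [hsm, hFone]
      map_star' := hFstar } with hπ
  have hπdiag : ∀ i, π (Matrix.single i i 1) = p i := by
    intro i
    show (∑ k, ∑ j, (Matrix.single i i 1) k j • u k j) = p i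
    rw [Finset.sum_eq_single i]
    · rw [Finset.sum_eq_single i]
      · simp [Matrix.single, huii i]
      · intro j _ hj; simp [Matrix.single, Ne.symm hj]
      · simp
    · intro k _ hk
      rw [Finset.sum_eq_zero]
      intro j _
      simp [Matrix.single, Ne.symm hk]
    · simp
  -- p 0 ≠ 0
  have hp0 : p 0 ≠ 0 := by
    intro h0
    apply hA
    rw [← hsum]
    rw [Finset.sum_eq_zero]
    intro i _
    have : w i = 0 := (CStarRing.star_mul_self_eq_zero_iff _).mp (by rw [hw2 i, h0])
    rw [← hw1 i, this, zero_mul]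
  -- extraction identity
  have hextu : ∀ i j k l : Fin n, star (w k) * u i j * w l
      = if k = i ∧ j = l then p 0 else 0 := by
    intro i j k l
    have : star (w k) * u i j * w l = (star (w k) * w i) * (star (w j) * w l) := by
      show star (w k) * (w i * star (w j)) * w l = _
      noncomm_ring
    rw [this, hkey k i, hkey j l]
    by_cases h1 : k = i
    · by_cases h2 : j = l
      · simp [h1, h2, (hproj 0).2]
      · simp [h1, h2]
    · simp [h1]
  have hext : ∀ (B : Matrix (Fin n) (Fin n) ℂ) (k l : Fin n),
      star (w k) * F B * w l = B k l • p 0 := by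
    intro B k l
    show star (w k) * (∑ i, ∑ j, B i j • u i j) * w l = B k l • p 0
    simp only [Finset.mul_sum, Finset.sum_mul, mul_smul_comm, smul_mul_assoc]
    rw [Finset.sum_eq_single k]
    · rw [Finset.sum_eq_single l]
      · rw [hextu k l k l, if_pos ⟨rfl, rfl⟩]
      · intro j _ hj
        rw [hextu k j k l, if_neg (fun h => hj h.2), smul_zero]
      · simp
    · intro i _ hi
      rw [Finset.sum_eq_zero]
      intro j _
      rw [hextu i j k l, if_neg (fun h => hi (h.1.symm)), smul_zero]
    · simp
  have hinj : Function.Injective π := by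
    intro B C h
    have h0 : F (B - C) = 0 := by
      have h1 : F (B - C) = F B - F C := by
        have := map_sub π B C
        exact this
      rw [h1, show F B = π B from rfl, show F C = π C from rfl, h, sub_self]
    ext k l
    have := hext (B - C) k l
    rw [h0, mul_zero, zero_mul] at this
    have hc : (B - C) k l = 0 := by
      rcases smul_eq_zero.mp this.symm with hc | hc
      · exact hc
      · exact absurd hc hp0
    rw [Matrix.sub_apply] at hc
    exact sub_eq_zero.mp hc
  -- conditional expectation of matrix units
  have hEu : ∀ i j, E (u i j) = if i = j then p i else 0 := by
    intro i j
    by_cases h : i = j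
    · subst h
      rw [if_pos rfl, huii i]
      exact hE.fix _ (hmem i)
    · rw [if_neg h]
      have hxl : p i * u i j = u i j := by
        show p i * (w i * star (w j)) = w i * star (w j)
        rw [← mul_assoc, hpw i]
      have hxr : u i j * p j = u i j := by
        show w i * star (w j) * p j = w i * star (w j)
        rw [mul_assoc, hsw j]
      have h1 : E (u i j) = p i * E (u i j) := by
        conv_lhs => rw [← hxl]
        exact (hE.bimod (p i) (hmem i) (u i j)).1
      have h2 : E (u i j) = E (u i j) * p j := by
        conv_lhs => rw [← hxr]
        exact (hE.bimod (p j) (hmem j) (u i j)).2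
      have hcomm : p i * E (u i j) = E (u i j) * p i :=
        hcentral i _ (hE.mem (u i j))
      calc E (u i j) = E (u i j) * p j := h2
        _ = (p i * E (u i j)) * p j := by rw [← h1]
        _ = (E (u i j) * p i) * p j := by rw [hcomm]
        _ = E (u i j) * (p i * p j) := by rw [mul_assoc]
        _ = 0 := by rw [horth i j h, mul_zero]
  refine ⟨π, hinj, hπdiag, ?_⟩
  intro B
  have hFd : F (Matrix.diagonal B.diag) = ∑ i, B i i • p i := by
    show (∑ i, ∑ j, Matrix.diagonal B.diag i j • u i j) = _
    refine Finset.sum_congr rfl fun i _ => ?_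
    rw [Finset.sum_eq_single i]
    · rw [Matrix.diagonal_apply_eq, huii i]
      rfl
    · intro j _ hj
      rw [Matrix.diagonal_apply_ne _ (Ne.symm hj), zero_smul]
    · simp
  show E (F B) = F (Matrix.diagonal B.diag)
  rw [hFd]
  show E (∑ i, ∑ j, B i j • u i j) = _
  rw [map_sum]
  refine Finset.sum_congr rfl fun i _ => ?_
  rw [map_sum, Finset.sum_eq_single i]
  · rw [map_smul, hEu, if_pos rfl]
  · intro j _ hj
    rw [map_smul, hEu, if_neg (fun h => hj h.symm), smul_zero]
  · simp
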